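/- Let X be a metric space, P a Borel probability measure on X, and f : X → Y a function into a metric space Y that is continuous at a point x̃ in the support of P. If x₁, x₂, … are i.i.d. samples from P and x̃_S(n) is a nearest sample to x̃ among the first n, then f(x̃_S(n)) converges to f(x̃) almost surely as n → ∞. -/

import Mathlib

open MeasureTheory Metric ProbabilityTheory Filter

/-- If `f : X → Y` is continuous at a point `xt` in the support of `P`, and
`sel n ω` is a nearest sample to `xt` among the first `n + 1` i.i.d. samples,
then `f (sel n ω)` converges to `f xt` almost surely. -/
theorem image_of_nearest_clone_tendsto
    {X : Type*} [MetricSpace X] [MeasurableSpace X] [BorelSpace X]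
    {Y : Type*} [MetricSpace Y]
    {Ω : Type*} [MeasurableSpace Ω] (μ : Measure Ω) [IsProbabilityMeasure μ]
    (P : Measure X) [IsProbabilityMeasure P] (xt : X)
    (hsupp : ∀ δ : ℝ, 0 < δ → 0 < P (closedBall xt δ))
    (f : X → Y) (hf : ContinuousAt f xt)
    (x : ℕ → Ω → X) (hmeas : ∀ i, Measurable (x i))
    (hindep : iIndepFun x μ)
    (hdist : ∀ i, Measure.map (x i) μ = P)
    (sel : ℕ → Ω → X)
    (hsel_mem : ∀ n ω, ∃ i ≤ n, sel n ω = x i ω)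
    (hsel_min : ∀ n ω, ∀ i ≤ n, dist (sel n ω) xt ≤ dist (x i ω) xt) :
    ∀ᵐ ω ∂μ, Tendsto (fun n => f (sel n ω)) atTop (nhds (f xt)) := by
  -- For each δ > 0, almost surely some sample lies in `closedBall xt δ`.
  have key : ∀ δ : ℝ, 0 < δ → ∀ᵐ ω ∂μ, ∃ i, x i ω ∈ closedBall xt δ := by
    intro δ hδ
    set B := closedBall xt δ with hB
    have hBmeas : MeasurableSet B := measurableSet_closedBall
    have hpre : ∀ i, μ (x i ⁻¹' Bᶜ) = 1 - P B := by
      intro i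
      have : μ (x i ⁻¹' Bᶜ) = P Bᶜ := by
        rw [← hdist i, Measure.map_apply (hmeas i) hBmeas.compl]
      rw [this, prob_compl_eq_one_sub hBmeas]
    have hlt : (1 : ENNReal) - P B < 1 := by
      refine ENNReal.sub_lt_self ENNReal.one_ne_top one_ne_zero ?_
      exact (hsupp δ hδ).ne'
    have hbound : ∀ n : ℕ, μ {ω | ∀ i, x i ω ∉ B} ≤ ((1 : ENNReal) - P B) ^ (n + 1) := by
      intro n
      have hsub : {ω | ∀ i, x i ω ∉ B} ⊆ ⋂ i ∈ Finset.range (n + 1), x i ⁻¹' Bᶜ := by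
        intro ω hω
        simp only [Set.mem_iInter, Set.mem_preimage, Set.mem_compl_iff]
        exact fun i _ => hω i
      calc μ {ω | ∀ i, x i ω ∉ B} ≤ μ (⋂ i ∈ Finset.range (n + 1), x i ⁻¹' Bᶜ) :=
            measure_mono hsub
        _ = ∏ i ∈ Finset.range (n + 1), μ (x i ⁻¹' Bᶜ) :=
            hindep.meas_biInter (fun i _ => ⟨Bᶜ, hBmeas.compl, rfl⟩)
        _ = ((1 : ENNReal) - P B) ^ (n + 1) := by
            rw [Finset.prod_congr rfl (fun i _ => hpre i), Finset.prod_const,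
              Finset.card_range]
      -- done
    have hzero : μ {ω | ∀ i, x i ω ∉ B} = 0 := by
      have htend : Tendsto (fun n : ℕ => ((1 : ENNReal) - P B) ^ (n + 1)) atTop (nhds 0) :=
        (ENNReal.tendsto_pow_atTop_nhds_zero_of_lt_one hlt).comp (tendsto_add_atTop_nat 1)
      have h := ge_of_tendsto' htend hbound
      exact le_antisymm h zero_le
    have : ∀ᵐ ω ∂μ, ¬ (∀ i, x i ω ∉ B) := by
      rw [ae_iff]; simpa using hzero
    filter_upwards [this] with ω hω
    push_neg at hω
    simpa using hω
  -- Combine over δ = 1 / (k + 1).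
  have key' : ∀ᵐ ω ∂μ, ∀ k : ℕ, ∃ i, x i ω ∈ closedBall xt (1 / (k + 1)) := by
    rw [ae_all_iff]
    intro k
    exact key _ (by positivity)
  filter_upwards [key'] with ω hω
  have htsel : Tendsto (fun n => sel n ω) atTop (nhds xt) := by
    rw [Metric.tendsto_atTop]
    intro ε hε
    obtain ⟨k, hk⟩ := exists_nat_one_div_lt hε
    obtain ⟨i, hi⟩ := hω k
    refine ⟨i, fun n hn => ?_⟩
    calc dist (sel n ω) xt ≤ dist (x i ω) xt := hsel_min n ω i hn
      _ ≤ 1 / (k + 1) := by simpa [dist_comm] using hi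
      _ < ε := hk
  exact (hf.tendsto.comp htsel)
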